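/- Let n ≥ 2, m ≥ 2, 0 ≤ r ≤ m, and t ∈ {0,…,m−2}. The permutation β_t of {0,…,n−1}^m defined by β_t(i_0,…,i_{m−1}) = (i_0,…,i_{t−1},i_{m−1},i_{t+1},…,i_{m−2},i_t) (swapping positions t and m−1 of the index tuple) is an automorphism of both D_n(r,m) and C_n(r,m). -/

import Mathlib

open Finset

/-- The `l`-th subvector in the concatenation decomposition:
`(subvec v l) i' = v (i'|l)`. -/
def subvec {n m : ℕ} (v : (Fin (m + 1) → Fin n) → ZMod 2) (l : Fin n) :
    (Fin m → Fin n) → ZMod 2 :=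
  fun i' => v (Fin.snoc i' l)

/-- The Berman code `D_n(r,m)`, defined recursively. -/
def BermanD (n : ℕ) : (m : ℕ) → ℕ → Set ((Fin m → Fin n) → ZMod 2)
  | 0, _ => {0}
  | m + 1, r =>
    if r = 0 then {v | ∑ i, v i = 0}
    else if m + 1 ≤ r then {0}
    else {v | (∀ l : Fin n, subvec v l ∈ BermanD n m (r - 1)) ∧
              (fun i' => ∑ l : Fin n, subvec v l i') ∈ BermanD n m r}

/-- The dual Berman code `C_n(r,m)`, defined recursively. -/
def BermanC (n : ℕ) : (m : ℕ) → ℕ → Set ((Fin m → Fin n) → ZMod 2)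
  | 0, _ => Set.univ
  | m + 1, r =>
    if r = 0 then {v | ∃ c : ZMod 2, ∀ i, v i = c}
    else if m + 1 ≤ r then Set.univ
    else {v | ∃ (u : (Fin m → Fin n) → ZMod 2) (w : Fin n → (Fin m → Fin n) → ZMod 2),
            u ∈ BermanC n m r ∧
            (∀ l : Fin n, (l : ℕ) < n - 1 → w l ∈ BermanC n m (r - 1)) ∧
            (∀ l : Fin n, (l : ℕ) = n - 1 → w l = 0) ∧
            (∀ l : Fin n, subvec v l = u + w l)}

/-- Hamming weight of a binary vector. -/
def hwt {n m : ℕ} (v : (Fin m → Fin n) → ZMod 2) : ℕ :=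
  (Finset.univ.filter fun i => v i ≠ 0).card

/-- `preceq j i` means `j ⪯ i`: for every position `k`, either `j k = 0` or `j k = i k`. -/
def preceq {n m : ℕ} (j i : Fin m → Fin n) : Prop :=
  ∀ k, (j k : ℕ) = 0 ∨ j k = i k

instance {n m : ℕ} (j i : Fin m → Fin n) : Decidable (preceq j i) :=
  inferInstanceAs (Decidable (∀ k, (j k : ℕ) = 0 ∨ j k = i k))

/-- Hamming weight of an index tuple. -/
def wtTuple {n m : ℕ} (i : Fin m → Fin n) : ℕ :=
  (Finset.univ.filter fun k => (i k : ℕ) ≠ 0).card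

/-- The vector `c_m(i')`: the indicator of `{i : i ⪯ i'}`. -/
def cVec {n : ℕ} (m : ℕ) (i' : Fin m → Fin n) : (Fin m → Fin n) → ZMod 2 :=
  fun i => if preceq i i' then 1 else 0

/-- The vector `d_m(i')`: the indicator of `{i : i' ⪯ i}`. -/
def dVec {n : ℕ} (m : ℕ) (i' : Fin m → Fin n) : (Fin m → Fin n) → ZMod 2 :=
  fun i => if preceq i' i then 1 else 0

/-- The matrix `A_m = A_1^{⊗m}`: its entry in row `i` and column `j` is `1` iff `j ⪯ i`. -/
def Amat (n m : ℕ) : Matrix (Fin m → Fin n) (Fin m → Fin n) (ZMod 2) :=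
  fun i j => if preceq j i then 1 else 0

/-! ### Auxiliary development: syndrome characterizations of the Berman codes -/

section Aux

variable {n m : ℕ}

/-- `D`-syndrome: `synD v i = ∑_{j ⪰ i} v j`. -/
def synD (v : (Fin m → Fin n) → ZMod 2) (i : Fin m → Fin n) : ZMod 2 :=
  ∑ j, if preceq i j then v j else 0

/-- `C`-syndrome: `synC v i = ∑_{j ⪯ i} v j`. -/
def synC (v : (Fin m → Fin n) → ZMod 2) (i : Fin m → Fin n) : ZMod 2 :=
  ∑ j, if preceq j i then v j else 0

lemma preceq_refl (i : Fin m → Fin n) : preceq i i := fun k => Or.inr rfl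

lemma preceq_trans {a b c : Fin m → Fin n} (h1 : preceq a b) (h2 : preceq b c) :
    preceq a c := by
  intro k
  rcases h1 k with h | h
  · exact Or.inl h
  · rcases h2 k with h' | h'
    · exact Or.inl (h ▸ h')
    · exact Or.inr (h.trans h')

lemma preceq_antisymm {a b : Fin m → Fin n} (h1 : preceq a b) (h2 : preceq b a) :
    a = b := by
  funext k
  rcases h1 k with h | h
  · rcases h2 k with h' | h'
    · exact Fin.ext (by omega)
    · exact h'.symm
  · exact h

lemma wtTuple_eq_zero_iff (i : Fin m → Fin n) :
    wtTuple i = 0 ↔ ∀ k, (i k : ℕ) = 0 := by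
  unfold wtTuple
  rw [Finset.card_eq_zero, Finset.filter_eq_empty_iff]
  simp

lemma wtTuple_le (i : Fin m → Fin n) : wtTuple i ≤ m := by
  have := Finset.card_filter_le (Finset.univ : Finset (Fin m))
    (fun k => (i k : ℕ) ≠ 0)
  simpa [wtTuple] using this

lemma preceq_snoc_iff (i' j' : Fin m → Fin n) (a b : Fin n) :
    preceq (Fin.snoc i' a) (Fin.snoc j' b) ↔ preceq i' j' ∧ ((a : ℕ) = 0 ∨ a = b) := by
  constructor
  · intro h
    refine ⟨fun k => ?_, ?_⟩
    · have := h k.castSucc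
      simpa [Fin.snoc_castSucc] using this
    · have := h (Fin.last m)
      simpa [Fin.snoc_last] using this
  · rintro ⟨h1, h2⟩ k
    refine Fin.lastCases ?_ ?_ k
    · simpa [Fin.snoc_last] using h2
    · intro k'
      simpa [Fin.snoc_castSucc] using h1 k'

lemma wtTuple_snoc (i' : Fin m → Fin n) (a : Fin n) :
    wtTuple (Fin.snoc i' a) = wtTuple i' + if (a : ℕ) ≠ 0 then 1 else 0 := by
  unfold wtTuple
  rw [Finset.card_filter, Finset.card_filter, Fin.sum_univ_castSucc]
  simp [Fin.snoc_castSucc, Fin.snoc_last]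

lemma sum_snoc (g : (Fin (m + 1) → Fin n) → ZMod 2) :
    ∑ j, g j = ∑ b : Fin n, ∑ j' : Fin m → Fin n, g (Fin.snoc j' b) := by
  rw [← Equiv.sum_comp (Fin.snocEquiv (fun _ => Fin n)) g, Fintype.sum_prod_type]
  rfl

lemma sum_ite_and_const {c : Prop} [Decidable c] {γ : Type*} [Fintype γ]
    (P : γ → Prop) [DecidablePred P] (f : γ → ZMod 2) :
    (∑ j, if P j ∧ c then f j else 0) = if c then ∑ j, if P j then f j else 0 else 0 := by
  split_ifs with h
  · exact Finset.sum_congr rfl fun j _ => by simp [h]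
  · exact Finset.sum_eq_zero fun j _ => by simp [h]

lemma synD_snoc (v : (Fin (m + 1) → Fin n) → ZMod 2) (i' : Fin m → Fin n) (a : Fin n) :
    synD v (Fin.snoc i' a) =
      ∑ b : Fin n, if (a : ℕ) = 0 ∨ a = b then synD (subvec v b) i' else 0 := by
  unfold synD
  rw [sum_snoc (fun j => if preceq (Fin.snoc i' a) j then v j else 0)]
  refine Finset.sum_congr rfl fun b _ => ?_
  rw [← sum_ite_and_const (fun j' => preceq i' j') (fun j' => subvec v b j')]
  refine Finset.sum_congr rfl fun j' _ => ?_
  exact if_congr (preceq_snoc_iff i' j' a b) rfl rfl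

lemma synC_snoc (v : (Fin (m + 1) → Fin n) → ZMod 2) (i' : Fin m → Fin n) (a : Fin n) :
    synC v (Fin.snoc i' a) =
      ∑ b : Fin n, if (b : ℕ) = 0 ∨ b = a then synC (subvec v b) i' else 0 := by
  unfold synC
  rw [sum_snoc (fun j => if preceq j (Fin.snoc i' a) then v j else 0)]
  refine Finset.sum_congr rfl fun b _ => ?_
  rw [← sum_ite_and_const (fun j' => preceq j' i') (fun j' => subvec v b j')]
  refine Finset.sum_congr rfl fun j' _ => ?_
  exact if_congr (preceq_snoc_iff j' i' b a) rfl rfl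

lemma synD_sum (w : Fin n → (Fin m → Fin n) → ZMod 2) (i : Fin m → Fin n) :
    synD (fun x => ∑ l, w l x) i = ∑ l, synD (w l) i := by
  unfold synD
  rw [Finset.sum_comm]
  refine Finset.sum_congr rfl fun j _ => ?_
  split_ifs with h <;> simp

lemma synC_add (u w : (Fin m → Fin n) → ZMod 2) (i : Fin m → Fin n) :
    synC (u + w) i = synC u i + synC w i := by
  unfold synC
  rw [← Finset.sum_add_distrib]
  refine Finset.sum_congr rfl fun j _ => ?_
  split_ifs with h <;> simp [Pi.add_apply]

/-- Generic parity lemma: a set of tuples closed under toggling coordinate `t`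
between `0` and a fixed nonzero value `c` has even cardinality. -/
lemma sum_one_eq_zero_of_toggle [NeZero n] (S : Finset (Fin m → Fin n)) (t : Fin m) (c : Fin n)
    (hc : (c : ℕ) ≠ 0)
    (hmem : ∀ a ∈ S, Function.update a t (if (a t : ℕ) = 0 then c else 0) ∈ S)
    (hval : ∀ a ∈ S, (a t : ℕ) = 0 ∨ a t = c) :
    ∑ _a ∈ S, (1 : ZMod 2) = 0 := by
  refine Finset.sum_involution
    (fun a _ => Function.update a t (if (a t : ℕ) = 0 then c else 0))
    (fun a _ => by decide) ?_ hmem ?_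
  · intro a ha _ hfix
    have h1 := congrFun hfix t
    rw [Function.update_self] at h1
    split_ifs at h1 with h
    · rw [← h1] at h
      exact hc h
    · apply h
      rw [← h1]
      simp
  · intro a ha
    funext s
    by_cases hs : s = t
    · subst hs
      rw [Function.update_self, Function.update_self]
      by_cases h : (a s : ℕ) = 0
      · rw [if_pos h, if_neg hc]
        exact (Fin.ext (by simp [h]) : (0 : Fin n) = a s)
      · rw [if_neg h, if_pos (by simp : (((0:Fin n)) : ℕ) = 0)]
        exact ((hval a ha).resolve_left h).symm
    · rw [Function.update_of_ne hs, Function.update_of_ne hs]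

lemma sum_one_preceq_eq_zero (i : Fin m → Fin n) (hi : wtTuple i ≠ 0) :
    (∑ j, if preceq j i then (1 : ZMod 2) else 0) = 0 := by
  rw [← Finset.sum_filter]
  obtain ⟨t, ht⟩ : ∃ t, (i t : ℕ) ≠ 0 := by
    by_contra h
    push_neg at h
    exact hi ((wtTuple_eq_zero_iff i).2 h)
  haveI : NeZero n := ⟨(i t).pos.ne'⟩
  refine sum_one_eq_zero_of_toggle _ t (i t) ht ?_ ?_
  · intro a ha
    rw [Finset.mem_filter] at ha ⊢
    refine ⟨Finset.mem_univ _, fun k => ?_⟩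
    by_cases hk : k = t
    · subst hk
      rw [Function.update_self]
      split_ifs with h
      · exact Or.inr rfl
      · exact Or.inl (by simp)
    · rw [Function.update_of_ne hk]
      exact ha.2 k
  · intro a ha
    rw [Finset.mem_filter] at ha
    exact ha.2 t

lemma sum_one_between (k j : Fin m → Fin n) :
    (∑ i, if preceq k i ∧ preceq i j then (1 : ZMod 2) else 0) =
      if k = j then 1 else 0 := by
  by_cases hkj : k = j
  · subst hkj
    rw [if_pos rfl]
    have hcond : ∀ i : Fin m → Fin n, (preceq k i ∧ preceq i k) ↔ i = k :=
      fun i => ⟨fun ⟨h1, h2⟩ => preceq_antisymm h2 h1,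
        fun h => by rw [h]; exact ⟨preceq_refl k, preceq_refl k⟩⟩
    simp only [hcond]
    simp [Finset.sum_ite_eq']
  · rw [if_neg hkj]
    by_cases hpre : preceq k j
    · obtain ⟨t, ht⟩ : ∃ t, k t ≠ j t := by
        by_contra h
        push_neg at h
        exact hkj (funext h)
      have hk0 : (k t : ℕ) = 0 := by
        rcases hpre t with h | h
        · exact h
        · exact absurd h ht
      have hj0 : (j t : ℕ) ≠ 0 := fun h => ht (Fin.ext (by omega))
      haveI : NeZero n := ⟨(j t).pos.ne'⟩
      rw [← Finset.sum_filter]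
      refine sum_one_eq_zero_of_toggle _ t (j t) hj0 ?_ ?_
      · intro a ha
        rw [Finset.mem_filter] at ha ⊢
        refine ⟨Finset.mem_univ _, fun s => ?_, fun s => ?_⟩
        · by_cases hs : s = t
          · subst hs; exact Or.inl hk0
          · rw [Function.update_of_ne hs]; exact ha.2.1 s
        · by_cases hs : s = t
          · subst hs
            rw [Function.update_self]
            split_ifs with h
            · exact Or.inr rfl
            · exact Or.inl (by simp)
          · rw [Function.update_of_ne hs]; exact ha.2.2 s
      · intro a ha
        rw [Finset.mem_filter] at ha
        exact ha.2.2 t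
    · have : ∀ i : Fin m → Fin n, ¬(preceq k i ∧ preceq i j) :=
        fun i ⟨h1, h2⟩ => hpre (preceq_trans h1 h2)
      simp [this]

/-- Inversion: the `D`-syndrome transform is involutive. -/
lemma synD_inversion (v : (Fin m → Fin n) → ZMod 2) (k : Fin m → Fin n) :
    (∑ i, if preceq k i then synD v i else 0) = v k := by
  unfold synD
  have step1 : (∑ i, if preceq k i then (∑ j, if preceq i j then v j else 0) else 0) =
      ∑ i, ∑ j, if preceq k i ∧ preceq i j then v j else 0 := by
    refine Finset.sum_congr rfl fun i _ => ?_
    split_ifs with h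
    · exact Finset.sum_congr rfl fun j _ => by simp [h]
    · exact (Finset.sum_eq_zero fun j _ => by simp [h]).symm
  rw [step1, Finset.sum_comm]
  have step2 : ∀ j : Fin m → Fin n,
      (∑ i, if preceq k i ∧ preceq i j then v j else 0) =
        (if k = j then (1 : ZMod 2) else 0) * v j := by
    intro j
    rw [← sum_one_between k j, Finset.sum_mul]
    exact Finset.sum_congr rfl fun i _ => by split_ifs <;> simp
  simp only [step2]
  simp [Finset.sum_ite_eq]

/-- The syndrome characterization of `D_n(r,m)`. -/
lemma bermanD_char (n : ℕ) (hn : 2 ≤ n) : ∀ (m r : ℕ) (v : (Fin m → Fin n) → ZMod 2),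
    v ∈ BermanD n m r ↔ ∀ i, wtTuple i ≤ r → synD v i = 0 := by
  haveI : NeZero n := ⟨by omega⟩
  intro m
  induction m with
  | zero =>
    intro r v
    simp only [BermanD, Set.mem_singleton_iff]
    constructor
    · intro h i _
      subst h
      simp [synD]
    · intro h
      funext j
      have h0 := h j (by simp [wtTuple])
      have : synD v j = v j := by
        unfold synD
        rw [Fintype.sum_eq_single j (fun x hx => absurd (Subsingleton.elim x j) hx)]
        rw [if_pos (preceq_refl j)]
      rw [this] at h0
      exact h0
  | succ m ih =>
    intro r v
    rcases Nat.eq_zero_or_pos r with hr0 | hrpos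
    · subst hr0
      simp only [BermanD, if_pos rfl, Set.mem_setOf_eq]
      constructor
      · intro h i hi
        rw [Nat.le_zero] at hi
        have hik := (wtTuple_eq_zero_iff i).1 hi
        have : synD v i = ∑ j, v j := by
          unfold synD
          refine Finset.sum_congr rfl fun j _ => ?_
          rw [if_pos (show preceq i j from fun k => Or.inl (hik k))]
        rw [this]
        exact h
      · intro h
        have h0 := h (fun _ => 0) (by simp [wtTuple_eq_zero_iff])
        have : synD v (fun _ => (0 : Fin n)) = ∑ j, v j := by
          unfold synD
          refine Finset.sum_congr rfl fun j _ => ?_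
          rw [if_pos (show preceq (fun _ => (0 : Fin n)) j from fun k => Or.inl (by simp))]
        rwa [this] at h0
    · by_cases hrm : m + 1 ≤ r
      · have hiff : v ∈ BermanD n (m + 1) r ↔ v = 0 := by
          simp only [BermanD, if_neg (by omega : ¬ r = 0), if_pos hrm,
            Set.mem_singleton_iff]
        rw [hiff]
        constructor
        · intro h i _
          subst h
          simp [synD]
        · intro h
          funext k
          have hall : ∀ i, synD v i = 0 := fun i =>
            h i (le_trans (wtTuple_le i) hrm)
          rw [← synD_inversion v k]
          refine Finset.sum_eq_zero fun i _ => ?_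
          rw [hall i]
          simp
      · -- main recursive case: 1 ≤ r ≤ m
        obtain ⟨r', rfl⟩ : ∃ r', r = r' + 1 := ⟨r - 1, by omega⟩
        have hiff : v ∈ BermanD n (m + 1) (r' + 1) ↔
            (∀ l : Fin n, subvec v l ∈ BermanD n m r') ∧
              (fun i' => ∑ l : Fin n, subvec v l i') ∈ BermanD n m (r' + 1) := by
          simp only [BermanD, if_neg (by omega : ¬ r' + 1 = 0), if_neg hrm,
            Set.mem_setOf_eq, Nat.add_sub_cancel]
        rw [hiff]
        constructor
        · rintro ⟨h1, h2⟩ i hi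
          induction i using Fin.snocCases with
          | snoc i' a =>
            rw [synD_snoc]
            rw [wtTuple_snoc] at hi
            by_cases ha : (a : ℕ) = 0
            · rw [if_neg (by omega)] at hi
              have h2' := ((ih (r' + 1) _).1 h2) i' (by omega)
              rw [synD_sum] at h2'
              calc (∑ b : Fin n, if (a:ℕ) = 0 ∨ a = b then synD (subvec v b) i' else 0)
                  = ∑ b : Fin n, synD (subvec v b) i' :=
                    Finset.sum_congr rfl fun b _ => if_pos (Or.inl ha)
                _ = 0 := h2'
            · rw [if_pos ha] at hi
              have : (∑ b : Fin n, if (a:ℕ) = 0 ∨ a = b then synD (subvec v b) i' else 0)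
                  = synD (subvec v a) i' := by
                have : ∀ b : Fin n, ((a:ℕ) = 0 ∨ a = b) ↔ a = b :=
                  fun b => ⟨fun h => h.resolve_left ha, Or.inr⟩
                simp only [this]
                simp [Finset.sum_ite_eq]
              rw [this]
              exact ((ih r' _).1 (h1 a)) i' (by omega)
        · intro h
          refine ⟨fun l => (ih r' _).2 fun i' hi' => ?_, (ih (r'+1) _).2 fun i' hi' => ?_⟩
          · -- subvec v l ∈ D(r', m)
            by_cases hl : (l : ℕ) = 0
            · -- synD (subvec v 0) i' = total - sum over nonzero b
              have htot := h (Fin.snoc i' (0 : Fin n))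
                (by rw [wtTuple_snoc, if_neg (by simp : ¬ ((0:Fin n):ℕ) ≠ 0)]; omega)
              rw [synD_snoc] at htot
              have hb : ∀ b : Fin n, b ≠ 0 → synD (subvec v b) i' = 0 := by
                intro b hb0
                have hbv : (b : ℕ) ≠ 0 := fun hh => hb0 (Fin.ext (by simp [hh]))
                have := h (Fin.snoc i' b)
                  (by rw [wtTuple_snoc, if_pos hbv]; omega)
                rw [synD_snoc] at this
                have heq : (∑ c : Fin n, if (b:ℕ) = 0 ∨ b = c then synD (subvec v c) i' else 0)
                    = synD (subvec v b) i' := by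
                  have hcond : ∀ c : Fin n, ((b:ℕ) = 0 ∨ b = c) ↔ b = c :=
                    fun c => ⟨fun h => h.resolve_left hbv, Or.inr⟩
                  simp only [hcond]
                  simp [Finset.sum_ite_eq]
                rwa [heq] at this
              have hsimp : (∑ b : Fin n, if ((0:Fin n):ℕ) = 0 ∨ (0:Fin n) = b
                  then synD (subvec v b) i' else 0) = ∑ b : Fin n, synD (subvec v b) i' :=
                Finset.sum_congr rfl fun b _ => if_pos (Or.inl (by simp))
              rw [hsimp] at htot
              have hl0 : l = 0 := Fin.ext (by simp [hl])
              subst hl0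
              calc synD (subvec v 0) i'
                  = ∑ b : Fin n, synD (subvec v b) i'
                    + ∑ b ∈ Finset.univ.erase 0, synD (subvec v b) i' := by
                    rw [← Finset.add_sum_erase _ _ (Finset.mem_univ (0 : Fin n)),
                      add_assoc, CharTwo.add_self_eq_zero, add_zero]
                _ = 0 := by
                    rw [htot, zero_add]
                    exact Finset.sum_eq_zero fun b hbmem =>
                      hb b (Finset.ne_of_mem_erase hbmem)
            · have := h (Fin.snoc i' l) (by rw [wtTuple_snoc, if_pos hl]; omega)
              rw [synD_snoc] at this
              have heq : (∑ c : Fin n, if (l:ℕ) = 0 ∨ l = c then synD (subvec v c) i' else 0)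
                  = synD (subvec v l) i' := by
                have hcond : ∀ c : Fin n, ((l:ℕ) = 0 ∨ l = c) ↔ l = c :=
                  fun c => ⟨fun h => h.resolve_left hl, Or.inr⟩
                simp only [hcond]
                simp [Finset.sum_ite_eq]
              rwa [heq] at this
          · -- sum of subvecs ∈ D(r'+1, m)
            rw [synD_sum]
            have := h (Fin.snoc i' (0 : Fin n))
              (by rw [wtTuple_snoc, if_neg (by simp : ¬ ((0:Fin n):ℕ) ≠ 0)]; omega)
            rw [synD_snoc] at this
            calc (∑ l : Fin n, synD (subvec v l) i')
                = ∑ b : Fin n, if ((0:Fin n):ℕ) = 0 ∨ (0:Fin n) = b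
                    then synD (subvec v b) i' else 0 :=
                  (Finset.sum_congr rfl fun b _ => (if_pos (Or.inl (by simp))).symm)
              _ = 0 := this

lemma eq_of_add_eq_zero_char2 {a b : ZMod 2} (h : a + b = 0) : a = b := by
  have : a + (b + b) = 0 + b := by rw [← add_assoc, h]
  rwa [CharTwo.add_self_eq_zero, add_zero, zero_add] at this

/-- The syndrome characterization of `C_n(r,m)`. -/
lemma bermanC_char (n : ℕ) (hn : 2 ≤ n) : ∀ (m r : ℕ) (v : (Fin m → Fin n) → ZMod 2),
    v ∈ BermanC n m r ↔ ∀ i, r < wtTuple i → synC v i = 0 := by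
  haveI : NeZero n := ⟨by omega⟩
  intro m
  induction m with
  | zero =>
    intro r v
    simp only [BermanC, Set.mem_univ, true_iff]
    intro i hi
    have : wtTuple i = 0 := by simp [wtTuple]
    omega
  | succ m ih =>
    intro r v
    rcases Nat.eq_zero_or_pos r with hr0 | hrpos
    · subst hr0
      simp only [BermanC, if_pos rfl, Set.mem_setOf_eq]
      constructor
      · rintro ⟨c, hc⟩ i hi
        have hrw : synC v i = (∑ j, if preceq j i then (1:ZMod 2) else 0) * c := by
          unfold synC
          rw [Finset.sum_mul]
          exact Finset.sum_congr rfl fun j _ => by rw [hc j]; split_ifs <;> simp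
        rw [hrw, sum_one_preceq_eq_zero i (by omega), zero_mul]
      · intro h
        refine ⟨v (fun _ => 0), ?_⟩
        suffices hN : ∀ N (i : Fin (m+1) → Fin n), wtTuple i ≤ N →
            v i = v (fun _ => 0) from fun i => hN (wtTuple i) i le_rfl
        intro N
        induction N with
        | zero =>
          intro i hi
          have h0 : ∀ k, (i k : ℕ) = 0 := (wtTuple_eq_zero_iff i).1 (Nat.le_zero.1 hi)
          have : i = fun _ => 0 := funext fun k => Fin.ext (by simp [h0 k])
          rw [this]
        | succ N ihN =>
          intro i hi
          by_cases h0 : wtTuple i = 0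
          · exact ihN i (by omega)
          · have hsyn := h i (by omega)
            unfold synC at hsyn
            rw [← Finset.sum_filter, ← Finset.add_sum_erase _ _
              (show i ∈ Finset.univ.filter (fun j => preceq j i) from
                Finset.mem_filter.2 ⟨Finset.mem_univ i, preceq_refl i⟩)] at hsyn
            have hsub : ∀ j ∈ (Finset.univ.filter fun j => preceq j i).erase i,
                v j = v (fun _ => 0) := by
              intro j hj
              have hji : preceq j i := (Finset.mem_filter.1 (Finset.mem_of_mem_erase hj)).2
              have hjne : j ≠ i := Finset.ne_of_mem_erase hj
              have hsubset : (Finset.univ.filter fun k => (j k : ℕ) ≠ 0) ⊆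
                  (Finset.univ.filter fun k => (i k : ℕ) ≠ 0) := by
                intro k hk
                rw [Finset.mem_filter] at hk ⊢
                refine ⟨Finset.mem_univ _, ?_⟩
                rcases hji k with h' | h'
                · exact absurd h' hk.2
                · rw [← h']; exact hk.2
              obtain ⟨t, ht⟩ : ∃ t, j t ≠ i t := by
                by_contra hcc; push_neg at hcc; exact hjne (funext hcc)
              have hjt : (j t : ℕ) = 0 := (hji t).resolve_right ht
              have hit : (i t : ℕ) ≠ 0 := fun hh => ht (Fin.ext (by omega))
              have hlt : wtTuple j < wtTuple i := by
                apply Finset.card_lt_card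
                refine ⟨hsubset, fun hss => ?_⟩
                have hmem := hss (Finset.mem_filter.2 ⟨Finset.mem_univ t, hit⟩)
                rw [Finset.mem_filter] at hmem
                exact hmem.2 hjt
              exact ihN j (by omega)
            rw [Finset.sum_congr rfl hsub, Finset.sum_const, nsmul_eq_mul] at hsyn
            have hcards : (((Finset.univ.filter fun j => preceq j i).card : ZMod 2)) = 0 := by
              have := sum_one_preceq_eq_zero i h0
              rw [← Finset.sum_filter, Finset.sum_const, nsmul_eq_mul, mul_one] at this
              exact this
            have hcarde : ((((Finset.univ.filter fun j => preceq j i).erase i).card : ZMod 2))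
                = 1 := by
              have hc1 : ((Finset.univ.filter fun j => preceq j i).erase i).card + 1 =
                  (Finset.univ.filter fun j => preceq j i).card :=
                Finset.card_erase_add_one
                  (show i ∈ Finset.univ.filter (fun j => preceq j i) from
                    Finset.mem_filter.2 ⟨Finset.mem_univ i, preceq_refl i⟩)
              have h2 : ((((Finset.univ.filter fun j => preceq j i).erase i).card + 1 : ℕ)
                  : ZMod 2) = 0 := by
                rw [hc1]; exact hcards
              rw [Nat.cast_add, Nat.cast_one] at h2
              exact eq_of_add_eq_zero_char2 h2
            rw [hcarde, one_mul] at hsyn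
            exact eq_of_add_eq_zero_char2 hsyn
    · by_cases hrm : m + 1 ≤ r
      · have hiff : v ∈ BermanC n (m + 1) r ↔ True := by
          simp only [BermanC, if_neg (by omega : ¬ r = 0), if_pos hrm, Set.mem_univ]
        rw [hiff]
        constructor
        · intro _ i hi
          exact absurd hi (by have := wtTuple_le i; omega)
        · intro _; trivial
      · -- main recursive case: 1 ≤ r ≤ m
        obtain ⟨r', rfl⟩ : ∃ r', r = r' + 1 := ⟨r - 1, by omega⟩
        set L : Fin n := ⟨n - 1, by omega⟩ with hL
        have hL0 : (L : ℕ) ≠ 0 := by simp [hL]; omega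
        have hiff : v ∈ BermanC n (m + 1) (r' + 1) ↔
            ∃ (u : (Fin m → Fin n) → ZMod 2) (w : Fin n → (Fin m → Fin n) → ZMod 2),
              u ∈ BermanC n m (r' + 1) ∧
              (∀ l : Fin n, (l : ℕ) < n - 1 → w l ∈ BermanC n m r') ∧
              (∀ l : Fin n, (l : ℕ) = n - 1 → w l = 0) ∧
              (∀ l : Fin n, subvec v l = u + w l) := by
          simp only [BermanC, if_neg (by omega : ¬ r' + 1 = 0), if_neg hrm,
            Set.mem_setOf_eq, Nat.add_sub_cancel]
        rw [hiff]
        constructor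
        · rintro ⟨u, w, hu, hw, hwL, hv⟩ i hi
          induction i using Fin.snocCases with
          | snoc i' a =>
            rw [synC_snoc]
            rw [wtTuple_snoc] at hi
            have hsyn : ∀ b : Fin n, synC (subvec v b) i' =
                synC u i' + synC (w b) i' := by
              intro b
              rw [hv b, synC_add]
            by_cases ha : (a : ℕ) = 0
            · rw [if_neg (by simpa using ha)] at hi
              have hcond : ∀ b : Fin n, ((b:ℕ) = 0 ∨ b = a) ↔ b = a := by
                intro b
                constructor
                · rintro (h' | h')
                  · exact Fin.ext (by omega)
                  · exact h'
                · exact Or.inr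
              simp only [hcond]
              rw [Finset.sum_ite_eq' Finset.univ a fun b => synC (subvec v b) i',
                if_pos (Finset.mem_univ a), hsyn a]
              have h1 : synC u i' = 0 := (ih (r'+1) u).1 hu i' (by omega)
              have h2 : synC (w a) i' = 0 := by
                rcases Nat.lt_or_ge (a : ℕ) (n-1) with h' | h'
                · exact (ih r' (w a)).1 (hw a h') i' (by omega)
                · have : (a : ℕ) = n - 1 := by have := a.isLt; omega
                  rw [hwL a this]
                  simp [synC]
              rw [h1, h2, add_zero]
            · rw [if_pos (by simpa using ha)] at hi
              have hzeroa : (0 : Fin n) ≠ a := fun h' => ha (by rw [← h']; simp)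
              have hset : ∀ b : Fin n, ((b:ℕ) = 0 ∨ b = a) ↔ b ∈ ({(0 : Fin n), a} : Finset (Fin n)) := by
                intro b
                simp only [Finset.mem_insert, Finset.mem_singleton]
                constructor
                · rintro (h' | h')
                  · exact Or.inl (Fin.ext (by simp [h']))
                  · exact Or.inr h'
                · rintro (h' | h')
                  · exact Or.inl (by simp [h'])
                  · exact Or.inr h'
              simp only [hset]
              rw [Finset.sum_ite_mem, Finset.univ_inter, Finset.sum_pair hzeroa,
                hsyn 0, hsyn a]
              have hw2 : ∀ b : Fin n, synC (w b) i' = 0 := by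
                intro b
                rcases Nat.lt_or_ge (b : ℕ) (n-1) with h' | h'
                · exact (ih r' (w b)).1 (hw b h') i' (by omega)
                · have : (b : ℕ) = n - 1 := by have := b.isLt; omega
                  rw [hwL b this]
                  simp [synC]
              rw [hw2 0, hw2 a, add_zero, CharTwo.add_self_eq_zero]
        · intro h
          refine ⟨subvec v L, fun l => subvec v l + subvec v L, ?_, ?_, ?_, ?_⟩
          · -- u ∈ C(r'+1, m)
            refine (ih (r'+1) _).2 fun i' hi' => ?_
            have hA := h (Fin.snoc i' L)
              (by rw [wtTuple_snoc, if_pos hL0]; omega)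
            have hB := h (Fin.snoc i' (0 : Fin n))
              (by rw [wtTuple_snoc, if_neg (by simp : ¬ ((0:Fin n):ℕ) ≠ 0)]; omega)
            rw [synC_snoc] at hA hB
            have hzeroL : (0 : Fin n) ≠ L := fun h' => hL0 (by rw [← h']; simp)
            have hsetL : ∀ b : Fin n, ((b:ℕ) = 0 ∨ b = L) ↔
                b ∈ ({(0 : Fin n), L} : Finset (Fin n)) := by
              intro b
              simp only [Finset.mem_insert, Finset.mem_singleton]
              constructor
              · rintro (h' | h')
                · exact Or.inl (Fin.ext (by simp [h']))
                · exact Or.inr h'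
              · rintro (h' | h')
                · exact Or.inl (by simp [h'])
                · exact Or.inr h'
            simp only [hsetL] at hA
            rw [Finset.sum_ite_mem, Finset.univ_inter, Finset.sum_pair hzeroL] at hA
            have hset0 : ∀ b : Fin n, ((b:ℕ) = 0 ∨ b = (0:Fin n)) ↔ b = (0:Fin n) := by
              intro b
              constructor
              · rintro (h' | h')
                · exact Fin.ext (by simp [h'])
                · exact h'
              · exact Or.inr
            simp only [hset0] at hB
            rw [Finset.sum_ite_eq' Finset.univ (0 : Fin n) fun b => synC (subvec v b) i',
              if_pos (Finset.mem_univ _)] at hB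
            rw [hB, zero_add] at hA
            exact hA
          · -- w l ∈ C(r', m) for l < n - 1
            intro l hl
            refine (ih r' _).2 fun i' hi' => ?_
            rw [synC_add]
            -- for any nonzero a : synC at (snoc i' a) gives synC (sv 0) + synC (sv a) = 0
            have key : ∀ a : Fin n, (a : ℕ) ≠ 0 →
                synC (subvec v 0) i' + synC (subvec v a) i' = 0 := by
              intro a ha
              have hA := h (Fin.snoc i' a) (by rw [wtTuple_snoc, if_pos ha]; omega)
              rw [synC_snoc] at hA
              have hzeroa : (0 : Fin n) ≠ a := fun h' => ha (by rw [← h']; simp)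
              have hset : ∀ b : Fin n, ((b:ℕ) = 0 ∨ b = a) ↔
                  b ∈ ({(0 : Fin n), a} : Finset (Fin n)) := by
                intro b
                simp only [Finset.mem_insert, Finset.mem_singleton]
                constructor
                · rintro (h' | h')
                  · exact Or.inl (Fin.ext (by simp [h']))
                  · exact Or.inr h'
                · rintro (h' | h')
                  · exact Or.inl (by simp [h'])
                  · exact Or.inr h'
              simp only [hset] at hA
              rw [Finset.sum_ite_mem, Finset.univ_inter, Finset.sum_pair hzeroa] at hA
              exact hA
            by_cases hl0 : (l : ℕ) = 0
            · have : l = 0 := Fin.ext (by simp [hl0])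
              subst this
              exact key L hL0
            · have e1 := eq_of_add_eq_zero_char2 (key l hl0)
              have e2 := eq_of_add_eq_zero_char2 (key L hL0)
              rw [← e1, ← e2, CharTwo.add_self_eq_zero]
          · -- w (n-1) = 0
            intro l hl
            have : l = L := Fin.ext (by simp [hL, hl])
            subst this
            funext j'
            simp [CharTwo.add_self_eq_zero]
          · -- subvec v l = u + w l
            intro l
            funext j'
            show subvec v l j' = subvec v L j' + (subvec v l j' + subvec v L j')
            rw [add_comm (subvec v l j'), ← add_assoc, CharTwo.add_self_eq_zero, zero_add]

lemma preceq_comp (σ : Equiv.Perm (Fin m)) (i j : Fin m → Fin n) :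
    preceq (i ∘ σ) (j ∘ σ) ↔ preceq i j := by
  constructor
  · intro h k
    have := h (σ.symm k)
    simpa [Function.comp] using this
  · intro h k
    exact h (σ k)

lemma wtTuple_comp (σ : Equiv.Perm (Fin m)) (i : Fin m → Fin n) :
    wtTuple (i ∘ σ) = wtTuple i := by
  unfold wtTuple
  rw [Finset.card_filter, Finset.card_filter]
  exact Equiv.sum_comp σ (fun k => if (i k : ℕ) ≠ 0 then 1 else 0)

/-- The reindexing equivalence `j ↦ j ∘ σ`. -/
def compPerm (σ : Equiv.Perm (Fin m)) : (Fin m → Fin n) ≃ (Fin m → Fin n) where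
  toFun j := j ∘ σ
  invFun j := j ∘ σ.symm
  left_inv j := by funext k; simp
  right_inv j := by funext k; simp

lemma synD_comp (σ : Equiv.Perm (Fin m)) (v : (Fin m → Fin n) → ZMod 2)
    (i : Fin m → Fin n) :
    synD (fun x => v (x ∘ σ)) i = synD v (i ∘ σ) := by
  unfold synD
  refine Fintype.sum_equiv (compPerm σ) _ _ fun j => ?_
  show (if preceq i j then v (j ∘ σ) else 0) = if preceq (i ∘ σ) (j ∘ σ) then v (j ∘ σ) else 0
  exact if_congr (preceq_comp σ i j).symm rfl rfl

lemma synC_comp (σ : Equiv.Perm (Fin m)) (v : (Fin m → Fin n) → ZMod 2)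
    (i : Fin m → Fin n) :
    synC (fun x => v (x ∘ σ)) i = synC v (i ∘ σ) := by
  unfold synC
  refine Fintype.sum_equiv (compPerm σ) _ _ fun j => ?_
  show (if preceq j i then v (j ∘ σ) else 0) = if preceq (j ∘ σ) (i ∘ σ) then v (j ∘ σ) else 0
  exact if_congr (preceq_comp σ j i).symm rfl rfl

end Aux

/-- swapping positions `t` and `m−1` of the index tuple is an automorphism
of both `D_n(r,m)` and `C_n(r,m)`. -/
theorem berman_auto_swap (n m r t : ℕ) (hn : 2 ≤ n) (hm : 2 ≤ m) (hr : r ≤ m)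
    (ht : t ≤ m - 2) :
    (∀ v ∈ BermanD n m r,
      (fun i : Fin m → Fin n =>
          v (i ∘ Equiv.swap (⟨t, by omega⟩ : Fin m) ⟨m - 1, by omega⟩)) ∈ BermanD n m r) ∧
    (∀ v ∈ BermanC n m r,
      (fun i : Fin m → Fin n =>
          v (i ∘ Equiv.swap (⟨t, by omega⟩ : Fin m) ⟨m - 1, by omega⟩)) ∈ BermanC n m r) := by
  set σ : Equiv.Perm (Fin m) :=
    Equiv.swap (⟨t, by omega⟩ : Fin m) ⟨m - 1, by omega⟩ with hσ
  constructor
  · intro v hv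
    rw [bermanD_char n hn] at hv ⊢
    intro i hi
    rw [synD_comp]
    exact hv (i ∘ σ) (by rwa [wtTuple_comp])
  · intro v hv
    rw [bermanC_char n hn] at hv ⊢
    intro i hi
    rw [synC_comp]
    exact hv (i ∘ σ) (by rwa [wtTuple_comp])
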